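/- For every ε > 0 there exists η with 0 < η ≤ 1 such that the following holds for every integer s ≥ 2 and every nonempty finite set V. Let ν : V^s → ℝ be nonnegative with ‖ν − 1‖_{cut(V^s)} ≤ η. Then: (i) for every G : V^s → ℝ with 0 ≤ G ≤ ν pointwise there exists W : V^s → [0,1] such that ‖G − W‖_{cut(V^s)} ≤ ε; and (ii) for every F : V^s → ℝ with |F| ≤ ν pointwise there exists H : V^s → [−1,1] such that ‖F − H‖_{cut(V^s)} ≤ ε. -/

import Mathlib

set_option linter.unusedSectionVars false


open Finset

/-- The average of a real-valued function on a finite type. -/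
noncomputable def avg (α : Type*) [Fintype α] (f : α → ℝ) : ℝ :=
  (∑ x, f x) / (Fintype.card α : ℝ)

/-- The `ℓ`-box norm `‖F‖_{□_ℓ(V^s)}` of `F : V^s → ℝ`.  Here `V^{s×ℓ}` is modelled as
`Fin s → Fin ℓ → V`, an element `ω ∈ [ℓ]^s` as `ω : Fin s → Fin ℓ`, and the projection
`π_ω : V^{s×ℓ} → V^s` sends `x` to `fun i => x i (ω i)`.  The box norm `‖F‖_{□(V^s)}`
is the case `ℓ = 2`. -/
noncomputable def boxNorm (V : Type*) [Fintype V] (s ℓ : ℕ) (F : (Fin s → V) → ℝ) : ℝ :=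
  (avg (Fin s → Fin ℓ → V) fun x =>
      ∏ ω : Fin s → Fin ℓ, F fun i => x i (ω i)) ^ (((ℓ : ℝ) ^ s)⁻¹)

/-- The cut norm `‖F‖_{cut(V^s)}` of `F : V^s → ℝ`; the distinguished element `1^s` of
`[2]^s` is modelled as `fun _ => (0 : Fin 2)`. -/
noncomputable def cutNorm (V : Type*) [Fintype V] (s : ℕ) (F : (Fin s → V) → ℝ) : ℝ :=
  sSup {r : ℝ | ∃ H : (Fin s → Fin 2) → (Fin s → V) → ℝ,
    (∀ ω y, H ω y ∈ Set.Icc (-1 : ℝ) 1) ∧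
    r = avg (Fin s → Fin 2 → V) fun x =>
      F (fun i => x i 0) *
        ∏ ω ∈ Finset.univ.filter (fun ω : Fin s → Fin 2 => ω ≠ fun _ => 0),
          H ω fun i => x i (ω i)}
namespace Stmt10Aux

variable {Y : Type} [Fintype Y] [Nonempty Y]

noncomputable def pr (f q : Y → ℝ) : ℝ := avg Y fun y => f y * q y

lemma cardY_pos : (0:ℝ) < (Fintype.card Y : ℝ) := by
  exact_mod_cast Fintype.card_pos

lemma avg_le_avg {f g : Y → ℝ} (h : ∀ y, f y ≤ g y) : avg Y f ≤ avg Y g := by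
  unfold avg
  have := cardY_pos (Y := Y)
  apply div_le_div_of_nonneg_right (Finset.sum_le_sum fun y _ => h y) this.le

lemma avg_const (c : ℝ) : avg Y (fun _ => c) = c := by
  unfold avg
  rw [Finset.sum_const, nsmul_eq_mul]
  field_simp
  rw [Finset.card_univ]; ring

lemma avg_congr {f g : Y → ℝ} (h : ∀ y, f y = g y) : avg Y f = avg Y g := by
  unfold avg; congr 1; exact Finset.sum_congr rfl fun y _ => h y

lemma avg_add (f g : Y → ℝ) : avg Y (fun y => f y + g y) = avg Y f + avg Y g := by
  unfold avg; rw [Finset.sum_add_distrib, add_div]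

lemma avg_neg (f : Y → ℝ) : avg Y (fun y => - f y) = - avg Y f := by
  unfold avg; rw [Finset.sum_neg_distrib, neg_div]

lemma avg_sub (f g : Y → ℝ) : avg Y (fun y => f y - g y) = avg Y f - avg Y g := by
  unfold avg; rw [Finset.sum_sub_distrib, sub_div]

lemma avg_mul_left (c : ℝ) (f : Y → ℝ) : avg Y (fun y => c * f y) = c * avg Y f := by
  unfold avg; rw [← Finset.mul_sum, mul_div_assoc]

lemma avg_le_of_le {f : Y → ℝ} {B : ℝ} (h : ∀ y, f y ≤ B) : avg Y f ≤ B :=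
  (avg_le_avg h).trans_eq (avg_const B)

lemma le_avg_of_le {f : Y → ℝ} {B : ℝ} (h : ∀ y, B ≤ f y) : B ≤ avg Y f :=
  ((avg_const B).symm.trans_le (avg_le_avg h))

lemma abs_avg_le {f : Y → ℝ} {B : ℝ} (h : ∀ y, |f y| ≤ B) : |avg Y f| ≤ B := by
  rw [abs_le]
  constructor
  · have h1 : avg Y (fun y => - f y) ≤ B := avg_le_of_le fun y => by
      have := (abs_le.mp (h y)).1
      show - f y ≤ B
      linarith
    rw [avg_neg] at h1; linarith
  · exact avg_le_of_le fun y => (abs_le.mp (h y)).2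

lemma avg_sum {ι : Type*} (s : Finset ι) (F : ι → Y → ℝ) :
    avg Y (fun y => ∑ k ∈ s, F k y) = ∑ k ∈ s, avg Y (F k) := by
  unfold avg
  rw [Finset.sum_comm, Finset.sum_div]


lemma pr_comm (f q : Y → ℝ) : pr f q = pr q f := avg_congr fun y => mul_comm _ _

lemma pr_smul (a : ℝ) (f q : Y → ℝ) : pr (a • f) q = a * pr f q := by
  unfold pr
  rw [← avg_mul_left]
  exact avg_congr fun y => by simp [mul_assoc]

lemma pr_sub (f g q : Y → ℝ) : pr (fun y => f y - g y) q = pr f q - pr g q := by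
  unfold pr
  rw [← avg_sub]
  exact avg_congr fun y => by ring

lemma pr_neg_right (f q : Y → ℝ) : pr f (-q) = - pr f q := by
  unfold pr
  rw [← avg_neg]
  exact avg_congr fun y => by simp

lemma pr_continuous (f : Y → ℝ) : Continuous fun q : Y → ℝ => pr f q := by
  unfold pr avg
  apply Continuous.div_const
  exact continuous_finset_sum _ fun y _ => (continuous_const.mul (continuous_apply y))

/-- Representation of a continuous linear functional on `Y → ℝ` via the pairing `pr`. -/
lemma pr_rep [DecidableEq Y] (φ : (Y → ℝ) →L[ℝ] ℝ) (h : Y → ℝ) :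
    pr h (fun y => φ (Pi.single y 1) * (Fintype.card Y : ℝ)) = φ h := by
  unfold pr avg
  have hsum : ∑ y, h y * (φ (Pi.single y 1) * (Fintype.card Y : ℝ))
      = (∑ y, φ (Pi.single y (h y))) * (Fintype.card Y : ℝ) := by
    rw [Finset.sum_mul]
    refine Finset.sum_congr rfl fun y _ => ?_
    have : Pi.single y (h y) = h y • (Pi.single y 1 : Y → ℝ) := by
      funext z
      by_cases hz : z = y <;> simp [Pi.single_apply, hz]
    rw [this, map_smul]
    simp [mul_assoc]
  rw [hsum, ← map_sum, Finset.univ_sum_single h]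
  field_simp

/-- The Hahn–Banach separation step. -/
lemma sep (D : Set (Y → ℝ)) (hDconv : Convex ℝ D) (hDcl : IsClosed D)
    (hD0 : (0 : Y → ℝ) ∈ D)
    (C : Set (Y → ℝ)) (hCconv : Convex ℝ C) (hCcomp : IsCompact C)
    (ε : ℝ) (hε : 0 < ε)
    (h : ∀ g ∈ C, ∃ q ∈ D, ε < pr g q) :
    ∃ q ∈ D, ∀ g ∈ C, ε ≤ pr g q := by
  classical
  set B : Set (Y → ℝ) := {b | ∀ q ∈ D, pr b q ≤ ε} with hBdef
  have hBconv : Convex ℝ B := by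
    intro b₁ h₁ b₂ h₂ a c ha hc hac
    intro q hq
    have e : pr (a • b₁ + c • b₂) q = a * pr b₁ q + c * pr b₂ q := by
      have : (a • b₁ + c • b₂) = (a • b₁) + (c • b₂) := rfl
      rw [this]
      have e2 : pr ((a • b₁) + (c • b₂)) q = pr (fun y => (a • b₁) y - (-(c • b₂)) y) q := by
        apply avg_congr; intro y; simp
      rw [e2, pr_sub, pr_smul]
      have : pr (-(c • b₂)) q = - pr (c • b₂) q := by
        rw [pr_comm, pr_neg_right, pr_comm]
      rw [this, pr_smul]
      ring
    rw [e]
    calc a * pr b₁ q + c * pr b₂ q ≤ a * ε + c * ε := by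
          have := h₁ q hq; have := h₂ q hq
          apply add_le_add <;> apply mul_le_mul_of_nonneg_left <;> assumption
      _ = ε := by rw [← add_mul, hac, one_mul]
  have hBcl : IsClosed B := by
    have : B = ⋂ q ∈ D, {b | pr b q ≤ ε} := by
      ext b; simp [hBdef]
    rw [this]
    refine isClosed_biInter fun q hq => ?_
    have hc : Continuous fun b : Y → ℝ => pr b q := by
      simpa [pr_comm] using pr_continuous (Y := Y) q
    exact isClosed_le hc continuous_const
  have hdisj : Disjoint C B := by
    rw [Set.disjoint_left]
    intro g hg hgB
    obtain ⟨q, hq, hlt⟩ := h g hg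
    exact absurd (hgB q hq) (not_le.mpr hlt)
  obtain ⟨φ, u, v, h1, huv, h2⟩ :=
    geometric_hahn_banach_compact_closed hCconv hCcomp hBconv hBcl hdisj
  -- use ψ = -φ ; t = -v
  set ψ : (Y → ℝ) →L[ℝ] ℝ := -φ with hψdef
  set t : ℝ := -v with htdef
  have hψB : ∀ b ∈ B, ψ b < t := fun b hb => by
    have := h2 b hb
    show -φ b < -v
    linarith
  have hψC : ∀ g ∈ C, t < ψ g := fun g hg => by
    have := h1 g hg
    show -v < -φ g
    linarith
  have h0B : (0 : Y → ℝ) ∈ B := by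
    intro q hq
    have : pr (0 : Y → ℝ) q = 0 := by
      unfold pr
      have : avg Y (fun y => (0:Y→ℝ) y * q y) = avg Y (fun _ => (0:ℝ)) :=
        avg_congr fun y => by simp
      rw [this, avg_const]
    rw [this]; exact hε.le
  have ht0 : 0 < t := by have := hψB 0 h0B; simpa using this
  set w : Y → ℝ := fun y => ψ (Pi.single y 1) * (Fintype.card Y : ℝ) with hwdef
  have hw : ∀ h : Y → ℝ, pr h w = ψ h := fun h => pr_rep ψ h
  set qbar : Y → ℝ := (ε / t) • w with hqdef
  have hqD : qbar ∈ D := by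
    by_contra hnot
    obtain ⟨ψ₂, u₂, hu1, hu2⟩ := geometric_hahn_banach_closed_point hDconv hDcl hnot
    have hu₂0 : 0 < u₂ := by have := hu1 0 hD0; simpa using this
    set w₂ : Y → ℝ := fun y => ψ₂ (Pi.single y 1) * (Fintype.card Y : ℝ) with hw2def
    have hw₂ : ∀ h : Y → ℝ, pr h w₂ = ψ₂ h := fun h => pr_rep ψ₂ h
    set b : Y → ℝ := (ε / u₂) • w₂ with hbdef
    have hbB : b ∈ B := by
      intro q hq
      have : pr b q = (ε / u₂) * ψ₂ q := by
        rw [hbdef, pr_smul, pr_comm, hw₂]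
      rw [this]
      have hle : ψ₂ q ≤ u₂ := (hu1 q hq).le
      calc (ε / u₂) * ψ₂ q ≤ (ε / u₂) * u₂ :=
            mul_le_mul_of_nonneg_left hle (by positivity)
        _ = ε := by field_simp
    have hA1 : ψ b < t := hψB b hbB
    have hA2 : u₂ < ψ₂ qbar := hu2
    have e1 : ψ b = (ε / u₂) * pr w₂ w := by rw [← hw b, hbdef, pr_smul]
    have e2 : ψ₂ qbar = (ε / t) * pr w₂ w := by
      rw [← hw₂ qbar, hqdef, pr_smul, pr_comm]
    rw [e1] at hA1
    rw [e2] at hA2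
    rw [div_mul_eq_mul_div] at hA1 hA2
    have h1' : ε * pr w₂ w < t * u₂ := (div_lt_iff₀ hu₂0).mp hA1
    have h2' : u₂ * t < ε * pr w₂ w := (lt_div_iff₀ ht0).mp hA2
    nlinarith
  refine ⟨qbar, hqD, fun g hg => ?_⟩
  have : pr g qbar = (ε / t) * ψ g := by
    rw [hqdef, pr_comm, pr_smul, pr_comm, hw]
  rw [this]
  have := hψC g hg
  calc ε = (ε / t) * t := by field_simp
    _ ≤ (ε / t) * ψ g := mul_le_mul_of_nonneg_left this.le (by positivity)

/-- The core dense model argument. -/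
lemma core (D : Set (Y → ℝ)) (hDconv : Convex ℝ D) (hDcl : IsClosed D)
    (hD1 : (fun _ => (1:ℝ)) ∈ D) (hDneg : ∀ q ∈ D, -q ∈ D)
    (hDmul : ∀ q ∈ D, ∀ r ∈ D, q * r ∈ D)
    (hDbd : ∀ q ∈ D, ∀ y, |q y| ≤ 1)
    (ν f : Y → ℝ) (hν0 : ∀ y, 0 ≤ ν y)
    (η : ℝ) (hη0 : 0 < η) (hη1 : η ≤ 1)
    (hνD : ∀ q ∈ D, pr (fun y => ν y - 1) q ≤ η)
    (lo : ℝ) (hlo : lo ≤ 0)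
    (c sel : ℝ → ℝ)
    (hsel : ∀ t : ℝ, |t| ≤ 1 → sel t ∈ Set.Icc lo 1 ∧ sel t * t = c t)
    (hdom : ∀ y, ∀ t : ℝ, |t| ≤ 1 → f y * t ≤ ν y * c t)
    (p : Polynomial ℝ) (δ : ℝ) (hδ0 : 0 ≤ δ)
    (hp : ∀ t : ℝ, |t| ≤ 1 → |Polynomial.eval t p - c t| ≤ δ)
    (ε : ℝ) (hε : 0 < ε)
    (hεM : (∑ k ∈ p.support, |p.coeff k|) * η + 3 * δ < ε) :
    ∃ W : Y → ℝ, (∀ y, W y ∈ Set.Icc lo 1) ∧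
      ∀ q ∈ D, pr (fun y => f y - W y) q ≤ ε := by
  classical
  by_contra hcon
  push_neg at hcon
  -- the set of candidate models
  set K : Set (Y → ℝ) := Set.pi Set.univ (fun _ : Y => Set.Icc lo 1) with hKdef
  have hKmem : ∀ W : Y → ℝ, W ∈ K ↔ ∀ y, W y ∈ Set.Icc lo 1 := by
    intro W; rw [hKdef, Set.mem_univ_pi]
  have hKconv : Convex ℝ K := convex_pi fun _ _ => convex_Icc lo 1
  have hKcomp : IsCompact K := isCompact_univ_pi fun _ => isCompact_Icc
  set m : (Y → ℝ) → (Y → ℝ) := fun W => fun y => f y - W y with hmdef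
  set C : Set (Y → ℝ) := m '' K with hCdef
  have hCconv : Convex ℝ C := by
    rintro _ ⟨W₁, h₁, rfl⟩ _ ⟨W₂, h₂, rfl⟩ a b ha hb hab
    refine ⟨a • W₁ + b • W₂, hKconv h₁ h₂ ha hb hab, ?_⟩
    funext y
    show f y - (a * W₁ y + b * W₂ y) = a * (f y - W₁ y) + b * (f y - W₂ y)
    linear_combination (f y) * hab.symm
  have hCcomp : IsCompact C := by
    apply hKcomp.image
    exact continuous_pi fun y => continuous_const.sub (continuous_apply y)
  have hD0 : (0 : Y → ℝ) ∈ D := by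
    have h1 := hD1
    have h2 := hDneg _ hD1
    have := hDconv h1 h2 (le_of_lt one_half_pos) (le_of_lt one_half_pos) (by norm_num)
    convert this using 1
    funext y; simp
  obtain ⟨qbar, hqD, hqbar⟩ := sep D hDconv hDcl hD0 C hCconv hCcomp ε hε (by
    rintro _ ⟨W, hW, rfl⟩
    obtain ⟨q, hq, hlt⟩ := hcon W ((hKmem W).mp hW)
    exact ⟨q, hq, hlt⟩)
  have hqbd : ∀ y, |qbar y| ≤ 1 := hDbd qbar hqD
  -- optimal model
  set g₀ : Y → ℝ := fun y => sel (qbar y) with hg₀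
  have hg₀K : g₀ ∈ K := (hKmem g₀).mpr fun y => (hsel (qbar y) (hqbd y)).1
  have step1 : ε ≤ pr f qbar - pr g₀ qbar := by
    have := hqbar (m g₀) ⟨g₀, hg₀K, rfl⟩
    rwa [show m g₀ = fun y => f y - g₀ y from rfl, pr_sub] at this
  have e1 : pr g₀ qbar = avg Y fun y => c (qbar y) :=
    avg_congr fun y => (hsel (qbar y) (hqbd y)).2
  have step2 : pr f qbar ≤ avg Y fun y => ν y * c (qbar y) :=
    avg_le_avg fun y => hdom y (qbar y) (hqbd y)
  have step3 : ε ≤ avg Y fun y => (ν y - 1) * c (qbar y) := by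
    have e2 : avg Y (fun y => (ν y - 1) * c (qbar y))
        = avg Y (fun y => ν y * c (qbar y)) - avg Y (fun y => c (qbar y)) := by
      rw [← avg_sub]
      exact avg_congr fun y => by ring
    rw [e2]
    rw [e1] at step1
    linarith
  have havgν : avg Y ν ≤ 2 := by
    have := hνD _ hD1
    have e3 : pr (fun y => ν y - 1) (fun _ => (1:ℝ)) = avg Y ν - 1 := by
      unfold pr
      rw [show (fun y => (ν y - 1) * (1:ℝ)) = fun y => ν y - (1:ℝ) by funext y; ring,
        avg_sub, avg_const]
    rw [e3] at this
    linarith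
  have habs : avg Y (fun y => |ν y - 1|) ≤ 3 := by
    have : ∀ y, |ν y - 1| ≤ ν y + 1 := fun y => by
      rw [abs_le]; constructor <;> [linarith [hν0 y]; linarith [hν0 y]]
    calc avg Y (fun y => |ν y - 1|) ≤ avg Y (fun y => ν y + 1) := avg_le_avg this
      _ = avg Y ν + 1 := by rw [avg_add, avg_const]
      _ ≤ 3 := by linarith
  have step4 : avg Y (fun y => (ν y - 1) * c (qbar y))
      ≤ avg Y (fun y => (ν y - 1) * Polynomial.eval (qbar y) p) + 3 * δ := by
    have hpt : ∀ y, (ν y - 1) * c (qbar y)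
        ≤ (ν y - 1) * Polynomial.eval (qbar y) p + |ν y - 1| * δ := by
      intro y
      have h1 : (ν y - 1) * (c (qbar y) - Polynomial.eval (qbar y) p)
          ≤ |ν y - 1| * δ := by
        calc (ν y - 1) * (c (qbar y) - Polynomial.eval (qbar y) p)
            ≤ |(ν y - 1) * (c (qbar y) - Polynomial.eval (qbar y) p)| := le_abs_self _
          _ = |ν y - 1| * |c (qbar y) - Polynomial.eval (qbar y) p| := abs_mul _ _
          _ ≤ |ν y - 1| * δ := by
              apply mul_le_mul_of_nonneg_left _ (abs_nonneg _)
              rw [abs_sub_comm]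
              exact hp (qbar y) (hqbd y)
      linarith
    calc avg Y (fun y => (ν y - 1) * c (qbar y))
        ≤ avg Y (fun y => (ν y - 1) * Polynomial.eval (qbar y) p + |ν y - 1| * δ) :=
          avg_le_avg hpt
      _ = avg Y (fun y => (ν y - 1) * Polynomial.eval (qbar y) p)
          + avg Y (fun y => |ν y - 1| * δ) := avg_add _ _
      _ ≤ avg Y (fun y => (ν y - 1) * Polynomial.eval (qbar y) p) + 3 * δ := by
          have : avg Y (fun y => |ν y - 1| * δ) = δ * avg Y (fun y => |ν y - 1|) := by
            rw [← avg_mul_left]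
            exact avg_congr fun y => by ring
          rw [this]
          have := mul_le_mul_of_nonneg_left habs hδ0
          linarith
  have hpow : ∀ k : ℕ, (fun y => qbar y ^ k) ∈ D := by
    intro k
    induction k with
    | zero => simpa [pow_zero] using hD1
    | succ n ih =>
        have := hDmul _ ih _ hqD
        have e : ((fun y => qbar y ^ n) * qbar) = fun y => qbar y ^ (n+1) := by
          funext y; simp [pow_succ]
        rwa [e] at this
  have hprpow : ∀ k : ℕ, |pr (fun y => ν y - 1) (fun y => qbar y ^ k)| ≤ η := by
    intro k
    rw [abs_le]
    constructor
    · have := hνD _ (hDneg _ (hpow k))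
      rw [pr_neg_right] at this
      linarith
    · exact hνD _ (hpow k)
  have step5 : avg Y (fun y => (ν y - 1) * Polynomial.eval (qbar y) p)
      ≤ (∑ k ∈ p.support, |p.coeff k|) * η := by
    have hexp : ∀ y, (ν y - 1) * Polynomial.eval (qbar y) p
        = ∑ k ∈ p.support, p.coeff k * ((ν y - 1) * qbar y ^ k) := by
      intro y
      rw [Polynomial.eval_eq_sum, Polynomial.sum_def, Finset.mul_sum]
      exact Finset.sum_congr rfl fun k _ => by ring
    rw [avg_congr hexp, avg_sum]
    rw [Finset.sum_mul]
    apply Finset.sum_le_sum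
    intro k _
    have e4 : avg Y (fun y => p.coeff k * ((ν y - 1) * qbar y ^ k))
        = p.coeff k * pr (fun y => ν y - 1) (fun y => qbar y ^ k) := by
      unfold pr
      exact avg_mul_left _ _
    rw [e4]
    calc p.coeff k * pr (fun y => ν y - 1) (fun y => qbar y ^ k)
        ≤ |p.coeff k * pr (fun y => ν y - 1) (fun y => qbar y ^ k)| := le_abs_self _
      _ = |p.coeff k| * |pr (fun y => ν y - 1) (fun y => qbar y ^ k)| := abs_mul _ _
      _ ≤ |p.coeff k| * η := mul_le_mul_of_nonneg_left (hprpow k) (abs_nonneg _)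
  linarith

section Cut

variable (s : ℕ) (V : Type) [Fintype V] [Nonempty V]

/-- `mix ω y z` is the point of `V^s` taking the value `y i` where `ω i = 0` and `z i` where
`ω i = 1`. -/
def mix (ω : Fin s → Fin 2) (y z : Fin s → V) : Fin s → V :=
  fun i => if ω i = 0 then y i else z i

/-- The index set `[2]^s \ {1^s}`. -/
noncomputable def Aset : Finset (Fin s → Fin 2) :=
  Finset.univ.filter (fun ω : Fin s → Fin 2 => ω ≠ fun _ => 0)

/-- The test function on `V^s` induced by a family `H`. -/
noncomputable def qH (H : (Fin s → Fin 2) → (Fin s → V) → ℝ) : (Fin s → V) → ℝ :=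
  fun y => avg (Fin s → V) (fun z => ∏ ω ∈ Aset s, H ω (mix s V ω y z))

def isBdd (H : (Fin s → Fin 2) → (Fin s → V) → ℝ) : Prop :=
  ∀ ω y, H ω y ∈ Set.Icc (-1 : ℝ) 1

/-- The class of test functions. -/
def Qc : Set ((Fin s → V) → ℝ) := {q | ∃ H, isBdd s V H ∧ q = qH s V H}

/-- `V^{s×2} ≃ V^s × V^s`. -/
def pe : ((Fin s → V) × (Fin s → V)) ≃ (Fin s → Fin 2 → V) where
  toFun := fun p i j => if j = 0 then p.1 i else p.2 i
  invFun := fun x => (fun i => x i 0, fun i => x i 1)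
  left_inv := fun p => by
    refine Prod.ext (funext fun i => ?_) (funext fun i => ?_)
    · simp
    · simp [if_neg (show (1 : Fin 2) ≠ 0 by decide)]
  right_inv := fun x => by
    funext i j
    fin_cases j <;> simp

lemma prod_H_abs_le {H : (Fin s → Fin 2) → (Fin s → V) → ℝ} (hH : isBdd s V H)
    (g : (Fin s → Fin 2) → Fin s → V) :
    |∏ ω ∈ Aset s, H ω (g ω)| ≤ 1 := by
  rw [Finset.abs_prod]
  apply Finset.prod_le_one (fun ω _ => abs_nonneg _)
  intro ω _
  exact abs_le.mpr ⟨(hH ω (g ω)).1, (hH ω (g ω)).2⟩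

lemma cut_elt (F : (Fin s → V) → ℝ) (H : (Fin s → Fin 2) → (Fin s → V) → ℝ) :
    (avg (Fin s → Fin 2 → V) fun x =>
      F (fun i => x i 0) *
        ∏ ω ∈ Finset.univ.filter (fun ω : Fin s → Fin 2 => ω ≠ fun _ => 0),
          H ω fun i => x i (ω i))
    = pr F (qH s V H) := by
  classical
  set N : ℝ := (Fintype.card (Fin s → V) : ℝ) with hN
  have hN0 : 0 < N := by rw [hN]; exact_mod_cast Fintype.card_pos
  have hcard : (Fintype.card (Fin s → Fin 2 → V) : ℝ) = N * N := by
    rw [← Fintype.card_congr (pe s V), Fintype.card_prod, hN]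
    push_cast
    ring
  have hsum : (∑ x : Fin s → Fin 2 → V,
        F (fun i => x i 0) *
          ∏ ω ∈ Finset.univ.filter (fun ω : Fin s → Fin 2 => ω ≠ fun _ => 0),
            H ω fun i => x i (ω i))
      = ∑ y : Fin s → V, ∑ z : Fin s → V,
          F y * ∏ ω ∈ Aset s, H ω (mix s V ω y z) := by
    rw [← Equiv.sum_comp (pe s V) (fun x => F (fun i => x i 0) *
      ∏ ω ∈ Finset.univ.filter (fun ω : Fin s → Fin 2 => ω ≠ fun _ => 0),
        H ω fun i => x i (ω i))]
    rw [Fintype.sum_prod_type]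
    refine Finset.sum_congr rfl fun y _ => Finset.sum_congr rfl fun z _ => ?_
    have h1 : (fun i => pe s V (y, z) i 0) = y := funext fun i => by simp [pe]
    rw [h1]
    rfl
  unfold pr qH avg
  rw [hsum, hcard]
  have e1 : ∀ y : Fin s → V,
      F y * ((∑ z, ∏ ω ∈ Aset s, H ω (mix s V ω y z)) / N)
      = (∑ z, F y * ∏ ω ∈ Aset s, H ω (mix s V ω y z)) / N := by
    intro y
    rw [← mul_div_assoc, Finset.mul_sum]
  simp only [← hN]
  simp_rw [e1]
  rw [← Finset.sum_div, div_div]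

lemma cut_bdd (F : (Fin s → V) → ℝ) :
    BddAbove {r : ℝ | ∃ H : (Fin s → Fin 2) → (Fin s → V) → ℝ,
      (∀ ω y, H ω y ∈ Set.Icc (-1 : ℝ) 1) ∧
      r = avg (Fin s → Fin 2 → V) fun x =>
        F (fun i => x i 0) *
          ∏ ω ∈ Finset.univ.filter (fun ω : Fin s → Fin 2 => ω ≠ fun _ => 0),
            H ω fun i => x i (ω i)} := by
  refine ⟨∑ y : Fin s → V, |F y|, ?_⟩
  rintro r ⟨H, hH, rfl⟩
  apply avg_le_of_le
  intro x
  calc F (fun i => x i 0) *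
        ∏ ω ∈ Finset.univ.filter (fun ω : Fin s → Fin 2 => ω ≠ fun _ => 0),
          H ω (fun i => x i (ω i))
      ≤ |F (fun i => x i 0)| * |∏ ω ∈ Finset.univ.filter
          (fun ω : Fin s → Fin 2 => ω ≠ fun _ => 0), H ω (fun i => x i (ω i))| := by
        rw [← abs_mul]; exact le_abs_self _
    _ ≤ |F (fun i => x i 0)| * 1 := by
        apply mul_le_mul_of_nonneg_left _ (abs_nonneg _)
        exact prod_H_abs_le s V hH _
    _ = |F (fun i => x i 0)| := mul_one _
    _ ≤ ∑ y : Fin s → V, |F y| :=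
        Finset.single_le_sum (fun y _ => abs_nonneg (F y)) (Finset.mem_univ _)

lemma pr_le_cut (F : (Fin s → V) → ℝ) {q : (Fin s → V) → ℝ} (hq : q ∈ Qc s V) :
    pr F q ≤ cutNorm V s F := by
  obtain ⟨H, hH, rfl⟩ := hq
  exact le_csSup (cut_bdd s V F) ⟨H, hH, (cut_elt s V F H).symm⟩

lemma cut_le {F : (Fin s → V) → ℝ} {r : ℝ} (hr : 0 ≤ r)
    (h : ∀ q ∈ Qc s V, pr F q ≤ r) : cutNorm V s F ≤ r := by
  apply Real.sSup_le _ hr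
  rintro x ⟨H, hH, rfl⟩
  rw [cut_elt]
  exact h _ ⟨H, hH, rfl⟩

lemma Q_one : (fun _ => (1:ℝ)) ∈ Qc s V := by
  refine ⟨fun _ _ => 1, fun ω y => by norm_num, ?_⟩
  funext y
  unfold qH
  simp [avg_const]

lemma Q_bd {q : (Fin s → V) → ℝ} (hq : q ∈ Qc s V) : ∀ y, |q y| ≤ 1 := by
  obtain ⟨H, hH, rfl⟩ := hq
  intro y
  exact abs_avg_le fun z => prod_H_abs_le s V hH _

lemma Q_neg (hs : 0 < s) {q : (Fin s → V) → ℝ} (hq : q ∈ Qc s V) : -q ∈ Qc s V := by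
  classical
  obtain ⟨H, hH, rfl⟩ := hq
  set ω₀ : Fin s → Fin 2 := fun _ => 1 with hω₀def
  have hω₀ : ω₀ ∈ Aset s := by
    rw [Aset, Finset.mem_filter]
    refine ⟨Finset.mem_univ _, fun hcontra => ?_⟩
    have := congrFun hcontra ⟨0, hs⟩
    exact (show (1 : Fin 2) ≠ 0 by decide) this
  refine ⟨fun ω => if ω = ω₀ then (fun w => - H ω w) else H ω, ?_, ?_⟩
  · intro ω y
    by_cases h : ω = ω₀
    · simp only [h, if_pos rfl]
      have h1 := (hH ω₀ y).1
      have h2 := (hH ω₀ y).2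
      constructor
      · show (-1 : ℝ) ≤ - H ω₀ y; linarith
      · show - H ω₀ y ≤ 1; linarith
    · simpa [if_neg h] using hH ω y
  · funext y
    show -(qH s V H y) = _
    unfold qH
    rw [← avg_neg]
    apply avg_congr
    intro z
    rw [← Finset.mul_prod_erase _ _ hω₀, ← Finset.mul_prod_erase _ _ hω₀]
    have herase : ∏ ω ∈ (Aset s).erase ω₀,
        (if ω = ω₀ then (fun w => - H ω w) else H ω) (mix s V ω y z)
        = ∏ ω ∈ (Aset s).erase ω₀, H ω (mix s V ω y z) := by
      refine Finset.prod_congr rfl fun ω hω => ?_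
      rw [if_neg (Finset.ne_of_mem_erase hω)]
    rw [herase]
    beta_reduce
    rw [if_pos rfl]
    ring

lemma Q_mul {q q' : (Fin s → V) → ℝ} (hq : q ∈ Qc s V) (hq' : q' ∈ Qc s V) :
    q * q' ∈ convexHull ℝ (Qc s V) := by
  classical
  obtain ⟨H, hH, rfl⟩ := hq
  obtain ⟨H', hH', rfl⟩ := hq'
  set N : ℝ := (Fintype.card (Fin s → V) : ℝ) with hN
  have hN0 : 0 < N := by rw [hN]; exact_mod_cast Fintype.card_pos
  set K : (Fin s → V) → (Fin s → Fin 2) → (Fin s → V) → ℝ :=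
    fun z' ω w => H ω w * H' ω (mix s V ω w z') with hKdef
  have hKb : ∀ z', isBdd s V (K z') := by
    intro z' ω w
    have h1 := abs_le.mpr ⟨(hH ω w).1, (hH ω w).2⟩
    have h2 := abs_le.mpr ⟨(hH' ω (mix s V ω w z')).1, (hH' ω (mix s V ω w z')).2⟩
    have h3 : |H ω w * H' ω (mix s V ω w z')| ≤ 1 := by
      rw [abs_mul]
      exact mul_le_one₀ h1 (abs_nonneg _) h2
    have h4 := abs_le.mp h3
    exact ⟨h4.1, h4.2⟩
  have key : ∀ y z z', ∏ ω ∈ Aset s, K z' ω (mix s V ω y z)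
      = (∏ ω ∈ Aset s, H ω (mix s V ω y z)) * ∏ ω ∈ Aset s, H' ω (mix s V ω y z') := by
    intro y z z'
    rw [← Finset.prod_mul_distrib]
    refine Finset.prod_congr rfl fun ω _ => ?_
    show H ω (mix s V ω y z) * H' ω (mix s V ω (mix s V ω y z) z') = _
    have : mix s V ω (mix s V ω y z) z' = mix s V ω y z' := by
      funext i
      unfold mix
      by_cases h : ω i = 0 <;> simp [h]
    rw [this]
  have hcm : Finset.univ.centerMass (fun _ : Fin s → V => (1:ℝ))
      (fun z' => qH s V (K z')) = qH s V H * qH s V H' := by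
    funext y
    rw [Finset.centerMass]
    have hw : ∑ _z' : Fin s → V, (1:ℝ) = N := by
      rw [Finset.sum_const, nsmul_eq_mul, mul_one, Finset.card_univ, hN]
    rw [hw]
    have happ : ((N⁻¹ : ℝ) • ∑ z' : Fin s → V, (1:ℝ) • qH s V (K z')) y
        = N⁻¹ * ∑ z' : Fin s → V, qH s V (K z') y := by
      simp [Finset.sum_apply]
    rw [happ]
    have hqK : ∀ z', qH s V (K z') y
        = ((∑ z, ∏ ω ∈ Aset s, H ω (mix s V ω y z))
            * ∏ ω ∈ Aset s, H' ω (mix s V ω y z')) / N := by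
      intro z'
      unfold qH avg
      rw [← hN]
      congr 1
      rw [Finset.sum_mul]
      exact Finset.sum_congr rfl fun z _ => key y z z'
    simp_rw [hqK]
    rw [← Finset.sum_div, ← Finset.mul_sum]
    show _ = qH s V H y * qH s V H' y
    unfold qH avg
    rw [← hN]
    field_simp
  rw [← hcm]
  exact Finset.centerMass_mem_convexHull _ (fun _ _ => zero_le_one)
    (by
      rw [Finset.sum_const, nsmul_eq_mul, mul_one, Finset.card_univ]
      exact_mod_cast Fintype.card_pos)
    (fun z' _ => ⟨K z', hKb z', rfl⟩)

/-- The dense model theorem relative to the cut norm, for fixed `s` and `V`. -/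
lemma key (hs : 0 < s)
    (ν f : (Fin s → V) → ℝ) (hν0 : ∀ x, 0 ≤ ν x)
    (η : ℝ) (hη0 : 0 < η) (hη1 : η ≤ 1)
    (hcut : cutNorm V s (fun x => ν x - 1) ≤ η)
    (lo : ℝ) (hlo : lo ≤ 0) (c sel : ℝ → ℝ)
    (hsel : ∀ t : ℝ, |t| ≤ 1 → sel t ∈ Set.Icc lo 1 ∧ sel t * t = c t)
    (hdom : ∀ y, ∀ t : ℝ, |t| ≤ 1 → f y * t ≤ ν y * c t)
    (p : Polynomial ℝ) (δ : ℝ) (hδ0 : 0 ≤ δ)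
    (hp : ∀ t : ℝ, |t| ≤ 1 → |Polynomial.eval t p - c t| ≤ δ)
    (ε : ℝ) (hε : 0 < ε)
    (hεM : (∑ k ∈ p.support, |p.coeff k|) * η + 3 * δ < ε) :
    ∃ W : (Fin s → V) → ℝ, (∀ y, W y ∈ Set.Icc lo 1) ∧
      cutNorm V s (fun y => f y - W y) ≤ ε := by
  classical
  set D : Set ((Fin s → V) → ℝ) := closure (convexHull ℝ (Qc s V)) with hDdef
  have hsub1 : Qc s V ⊆ D := fun q hq => subset_closure (subset_convexHull ℝ _ hq)
  have hDconv : Convex ℝ D := (convex_convexHull ℝ _).closure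
  have hDcl : IsClosed D := isClosed_closure
  have hD1 : (fun _ => (1:ℝ)) ∈ D := hsub1 (Q_one s V)
  -- boundedness
  have hDbd : ∀ q ∈ D, ∀ y, |q y| ≤ 1 := by
    set S : Set ((Fin s → V) → ℝ) := {q | ∀ y, q y ∈ Set.Icc (-1:ℝ) 1} with hSdef
    have hScl : IsClosed S := by
      have : S = Set.pi Set.univ (fun _ : Fin s → V => Set.Icc (-1:ℝ) 1) := by
        ext q; rw [Set.mem_univ_pi]; rfl
      rw [this]
      exact isClosed_set_pi fun y _ => isClosed_Icc
    have hSconv : Convex ℝ S := by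
      have : S = Set.pi Set.univ (fun _ : Fin s → V => Set.Icc (-1:ℝ) 1) := by
        ext q; rw [Set.mem_univ_pi]; rfl
      rw [this]
      exact convex_pi fun _ _ => convex_Icc _ _
    have hQS : Qc s V ⊆ S := fun q hq y => abs_le.mp (Q_bd s V hq y)
    have : D ⊆ S := closure_minimal (convexHull_min hQS hSconv) hScl
    exact fun q hq y => abs_le.mpr (this hq y)
  -- negation
  have hDneg : ∀ q ∈ D, -q ∈ D := by
    set S : Set ((Fin s → V) → ℝ) := {q | -q ∈ D} with hSdef
    have hScl : IsClosed S := hDcl.preimage continuous_neg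
    have hSconv : Convex ℝ S := by
      intro q1 h1 q2 h2 a b ha hb hab
      show -(a • q1 + b • q2) ∈ D
      have : -(a • q1 + b • q2) = a • (-q1) + b • (-q2) := by
        funext y; simp; ring
      rw [this]
      exact hDconv h1 h2 ha hb hab
    have hQS : Qc s V ⊆ S := fun q hq => hsub1 (Q_neg s V hs hq)
    exact fun q hq => closure_minimal (convexHull_min hQS hSconv) hScl hq
  -- multiplication
  have step1 : ∀ q ∈ Qc s V, ∀ x ∈ D, q * x ∈ D := by
    intro q hq
    have hScl : IsClosed {x : (Fin s → V) → ℝ | q * x ∈ D} := by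
      apply hDcl.preimage (f := fun x : (Fin s → V) → ℝ => q * x)
      exact continuous_pi fun y => continuous_const.mul (continuous_apply y)
    have hSconv : Convex ℝ {x : (Fin s → V) → ℝ | q * x ∈ D} := by
      intro x1 h1 x2 h2 a b ha hb hab
      show q * (a • x1 + b • x2) ∈ D
      have : q * (a • x1 + b • x2) = a • (q * x1) + b • (q * x2) := by
        funext y; simp; ring
      rw [this]
      exact hDconv h1 h2 ha hb hab
    have hQS : Qc s V ⊆ {x : (Fin s → V) → ℝ | q * x ∈ D} := fun x hx =>
      subset_closure (Q_mul s V hq hx)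
    exact fun x hx => closure_minimal (convexHull_min hQS hSconv) hScl hx
  have hDmul : ∀ q ∈ D, ∀ r ∈ D, q * r ∈ D := by
    intro q hq r hr
    have hScl : IsClosed {x : (Fin s → V) → ℝ | x * r ∈ D} := by
      apply hDcl.preimage (f := fun x : (Fin s → V) → ℝ => x * r)
      exact continuous_pi fun y => (continuous_apply y).mul continuous_const
    have hSconv : Convex ℝ {x : (Fin s → V) → ℝ | x * r ∈ D} := by
      intro x1 h1 x2 h2 a b ha hb hab
      show (a • x1 + b • x2) * r ∈ D
      have : (a • x1 + b • x2) * r = a • (x1 * r) + b • (x2 * r) := by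
        funext y; simp; ring
      rw [this]
      exact hDconv h1 h2 ha hb hab
    have hQS : Qc s V ⊆ {x : (Fin s → V) → ℝ | x * r ∈ D} := fun x hx =>
      step1 x hx r hr
    exact closure_minimal (convexHull_min hQS hSconv) hScl hq
  -- cut-norm control
  have hνD : ∀ q ∈ D, pr (fun x => ν x - 1) q ≤ η := by
    set S : Set ((Fin s → V) → ℝ) := {q | pr (fun x => ν x - 1) q ≤ η} with hSdef
    have hScl : IsClosed S := isClosed_le (pr_continuous _) continuous_const
    have hSconv : Convex ℝ S := by
      intro q1 h1 q2 h2 a b ha hb hab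
      show pr (fun x => ν x - 1) (a • q1 + b • q2) ≤ η
      have e : pr (fun x => ν x - 1) (a • q1 + b • q2)
          = a * pr (fun x => ν x - 1) q1 + b * pr (fun x => ν x - 1) q2 := by
        rw [pr_comm, show (a • q1 + b • q2) = (a • q1) + (b • q2) from rfl]
        have e2 : pr ((a • q1) + (b • q2)) (fun x => ν x - 1)
            = pr (fun y => (a • q1) y - (-(b • q2)) y) (fun x => ν x - 1) := by
          apply avg_congr; intro y; simp
        rw [e2, pr_sub, pr_smul]
        have : pr (-(b • q2)) (fun x => ν x - 1) = - pr (b • q2) (fun x => ν x - 1) := by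
          rw [pr_comm, pr_neg_right, pr_comm]
        rw [this, pr_smul, pr_comm, pr_comm q2]
        ring
      rw [e]
      calc a * pr (fun x => ν x - 1) q1 + b * pr (fun x => ν x - 1) q2
          ≤ a * η + b * η := by
            apply add_le_add <;> apply mul_le_mul_of_nonneg_left <;> assumption
        _ = η := by rw [← add_mul, hab, one_mul]
    have hQS : Qc s V ⊆ S := fun q hq => le_trans (pr_le_cut s V _ hq) hcut
    exact fun q hq => closure_minimal (convexHull_min hQS hSconv) hScl hq
  obtain ⟨W, hW, hWpr⟩ := core D hDconv hDcl hD1 hDneg hDmul hDbd ν f hν0 η hη0 hη1 hνD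
    lo hlo c sel hsel hdom p δ hδ0 hp ε hε hεM
  exact ⟨W, hW, cut_le s V hε.le fun q hq => hWpr q (hsub1 hq)⟩

end Cut

/-- Iterates of the classical polynomial approximation of `|t|`. -/
noncomputable def sqp : ℕ → Polynomial ℝ
  | 0 => 0
  | n+1 => sqp n + (Polynomial.X ^ 2 - (sqp n) ^ 2) * Polynomial.C (1/2 : ℝ)

lemma sqp_eval_succ (n : ℕ) (t : ℝ) :
    (sqp (n+1)).eval t = (sqp n).eval t + (t^2 - ((sqp n).eval t)^2) * (1/2) := by
  simp [sqp]

lemma sqp_bounds (n : ℕ) : ∀ t : ℝ, |t| ≤ 1 →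
    0 ≤ (sqp n).eval t ∧ (sqp n).eval t ≤ |t| := by
  induction n with
  | zero => intro t ht; simp [sqp, abs_nonneg]
  | succ n ih =>
      intro t ht
      obtain ⟨h0, h1⟩ := ih t ht
      have ht2 : |t|^2 = t^2 := sq_abs t
      have h0' : 0 ≤ |t| := abs_nonneg t
      constructor
      · rw [sqp_eval_succ]; nlinarith
      · rw [sqp_eval_succ]
        have hfac : 0 ≤ (|t| - (sqp n).eval t) * (1 - (|t| + (sqp n).eval t)/2) :=
          mul_nonneg (by linarith) (by linarith)
        nlinarith [hfac]

lemma sqp_err (n : ℕ) : ∀ t : ℝ, |t| ≤ 1 →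
    |t| - (sqp n).eval t ≤ |t| * (1 - |t|/2)^n := by
  induction n with
  | zero => intro t ht; simp [sqp]
  | succ n ih =>
      intro t ht
      obtain ⟨h0, h1⟩ := sqp_bounds n t ht
      have hih := ih t ht
      have h0' : 0 ≤ |t| := abs_nonneg t
      have hfac : |t| - (sqp (n+1)).eval t
          = (|t| - (sqp n).eval t) * (1 - (|t| + (sqp n).eval t)/2) := by
        rw [sqp_eval_succ]
        linear_combination (1/2 : ℝ) * sq_abs t
      rw [hfac]
      have h2 : (1 - (|t| + (sqp n).eval t)/2) ≤ (1 - |t|/2) := by linarith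
      have h3 : 0 ≤ 1 - (|t| + (sqp n).eval t)/2 := by linarith
      calc (|t| - (sqp n).eval t) * (1 - (|t| + (sqp n).eval t)/2)
          ≤ (|t| * (1 - |t|/2)^n) * (1 - |t|/2) := by
            apply mul_le_mul hih h2 h3
            exact mul_nonneg h0' (pow_nonneg (by linarith) n)
        _ = |t| * (1 - |t|/2)^(n+1) := by ring
  
lemma pow_decay (n : ℕ) (hn : 0 < n) (a : ℝ) (ha0 : 0 ≤ a) (ha1 : a ≤ 1) :
    a * (1 - a/2)^n ≤ 2 / n := by
  have hn' : (0:ℝ) < n := by exact_mod_cast hn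
  rcases eq_or_lt_of_le ha0 with h | h
  · rw [← h]
    simp
    positivity
  · have h12 : (0:ℝ) < 1 + a/2 := by linarith
    have key2 : (1 - a/2) ≤ 1/(1 + a/2) := by
      rw [le_div_iff₀ h12]; nlinarith
    have key3 : (1 - a/2)^n ≤ (1/(1+a/2))^n :=
      pow_le_pow_left₀ (by linarith) key2 n
    have key4 : (1/(1+a/2) : ℝ)^n = 1/(1+a/2)^n := by
      rw [one_div, one_div, inv_pow]
    have key5 : 1 + (n:ℝ)*(a/2) ≤ (1+a/2)^n := one_add_mul_le_pow (by linarith) n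
    have key6 : (1/(1+a/2)^n : ℝ) ≤ 1/(1 + (n:ℝ)*(a/2)) := by
      apply one_div_le_one_div_of_le
      · positivity
      · exact key5
    have hchain : a * (1-a/2)^n ≤ a * (1/(1 + (n:ℝ)*(a/2))) := by
      apply mul_le_mul_of_nonneg_left _ ha0
      rw [key4] at key3
      exact key3.trans key6
    refine hchain.trans ?_
    rw [mul_one_div, div_le_div_iff₀ (by positivity) hn']
    nlinarith

end Stmt10Aux


open Stmt10Aux

theorem stmt10 (ε : ℝ) (hε : 0 < ε) :
    ∃ η : ℝ, 0 < η ∧ η ≤ 1 ∧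
      ∀ (s : ℕ), 2 ≤ s →
        ∀ (V : Type) [Fintype V] [Nonempty V] (ν : (Fin s → V) → ℝ),
          (∀ x, 0 ≤ ν x) →
          cutNorm V s (fun x => ν x - 1) ≤ η →
          (∀ G : (Fin s → V) → ℝ, (∀ x, 0 ≤ G x ∧ G x ≤ ν x) →
            ∃ W : (Fin s → V) → ℝ, (∀ x, W x ∈ Set.Icc (0 : ℝ) 1) ∧
              cutNorm V s (fun x => G x - W x) ≤ ε) ∧
          (∀ F : (Fin s → V) → ℝ, (∀ x, |F x| ≤ ν x) →
            ∃ H : (Fin s → V) → ℝ, (∀ x, H x ∈ Set.Icc (-1 : ℝ) 1) ∧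
              cutNorm V s (fun x => F x - H x) ≤ ε) := by
  classical
  obtain ⟨n, hn⟩ := exists_nat_ge (max 1 (12/ε))
  have hn1 : 1 ≤ (n:ℝ) := le_trans (le_max_left _ _) hn
  have hn0 : 0 < n := by exact_mod_cast lt_of_lt_of_le zero_lt_one hn1
  have hn' : (0:ℝ) < n := by exact_mod_cast hn0
  have hnε : 2/(n:ℝ) ≤ ε/6 := by
    have h12 : 12/ε ≤ (n:ℝ) := le_trans (le_max_right _ _) hn
    have h13 : 12 ≤ (n:ℝ) * ε := by
      rw [div_le_iff₀ hε] at h12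
      linarith
    rw [div_le_div_iff₀ hn' (by norm_num : (0:ℝ) < 6)]
    nlinarith
  set pA := sqp n with hpAdef
  set pP := (Polynomial.X + pA) * Polynomial.C (1/2 : ℝ) with hpPdef
  set MA : ℝ := ∑ k ∈ pA.support, |pA.coeff k| with hMAdef
  set MP : ℝ := ∑ k ∈ pP.support, |pP.coeff k| with hMPdef
  have hMA0 : 0 ≤ MA := Finset.sum_nonneg fun k _ => abs_nonneg _
  have hMP0 : 0 ≤ MP := Finset.sum_nonneg fun k _ => abs_nonneg _
  set M : ℝ := MA + MP + 1 with hMdef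
  have hM1 : (1:ℝ) ≤ M := by rw [hMdef]; linarith
  have hM0 : (0:ℝ) < M := lt_of_lt_of_le one_pos hM1
  set η : ℝ := min 1 (ε/(4*M)) with hηdef
  have hη0 : 0 < η := lt_min one_pos (by positivity)
  have hη1 : η ≤ 1 := min_le_left _ _
  have hηM : ∀ Mp : ℝ, 0 ≤ Mp → Mp ≤ M → Mp * η + 3*(ε/6) < ε := by
    intro Mp h0 h1
    have h2 : Mp * η ≤ M * (ε/(4*M)) :=
      mul_le_mul h1 (min_le_right _ _) hη0.le hM0.le
    have h3 : M * (ε/(4*M)) = ε/4 := by field_simp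
    rw [h3] at h2
    linarith
  have hpA : ∀ t : ℝ, |t| ≤ 1 → abs (pA.eval t - |t|) ≤ ε/6 := by
    intro t ht
    obtain ⟨h0, h1⟩ := sqp_bounds n t ht
    have herr : |t| - pA.eval t ≤ ε/6 :=
      (sqp_err n t ht).trans ((pow_decay n hn0 |t| (abs_nonneg t) ht).trans hnε)
    rw [abs_sub_comm, abs_of_nonneg (by linarith)]
    exact herr
  have hpP : ∀ t : ℝ, |t| ≤ 1 → |pP.eval t - (t + |t|)/2| ≤ ε/6 := by
    intro t ht
    have he : pP.eval t = (t + pA.eval t) * (1/2) := by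
      rw [hpPdef]; simp
    rw [he]
    have h1 := abs_le.mp (hpA t ht)
    rw [abs_le]
    constructor <;> [linarith [h1.1]; linarith [h1.2]]
  refine ⟨η, hη0, hη1, ?_⟩
  intro s hs V _ _ ν hν0 hcut
  have hs0 : 0 < s := by omega
  constructor
  · -- part (i): 0 ≤ G ≤ ν
    intro G hG
    refine key s V hs0 ν G hν0 η hη0 hη1 hcut 0 le_rfl
      (fun t => (t + |t|)/2) (fun t => if 0 ≤ t then 1 else 0) ?_ ?_
      pP (ε/6) (by positivity) hpP ε hε ?_
    · intro t ht
      beta_reduce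
      by_cases h : 0 ≤ t
      · rw [if_pos h, abs_of_nonneg h]
        exact ⟨⟨zero_le_one, le_rfl⟩, by ring⟩
      · push_neg at h
        rw [if_neg (not_le.mpr h), abs_of_neg h]
        exact ⟨⟨le_rfl, zero_le_one⟩, by ring⟩
    · intro y t ht
      beta_reduce
      by_cases h : 0 ≤ t
      · rw [abs_of_nonneg h]
        have : (t + t)/2 = t := by ring
        rw [this]
        exact mul_le_mul_of_nonneg_right (hG y).2 h
      · push_neg at h
        rw [abs_of_neg h]
        have : (t + -t)/2 = 0 := by ring
        rw [this, mul_zero]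
        exact mul_nonpos_of_nonneg_of_nonpos (hG y).1 h.le
    · rw [← hMPdef]
      exact hηM MP hMP0 (by rw [hMdef]; linarith)
  · -- part (ii): |F| ≤ ν
    intro F hF
    refine key s V hs0 ν F hν0 η hη0 hη1 hcut (-1) (by norm_num)
      (fun t => |t|) (fun t => if 0 ≤ t then 1 else -1) ?_ ?_
      pA (ε/6) (by positivity) hpA ε hε ?_
    · intro t ht
      beta_reduce
      by_cases h : 0 ≤ t
      · rw [if_pos h, abs_of_nonneg h]
        exact ⟨⟨by norm_num, le_rfl⟩, by ring⟩
      · push_neg at h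
        rw [if_neg (not_le.mpr h), abs_of_neg h]
        exact ⟨⟨le_rfl, by norm_num⟩, by ring⟩
    · intro y t ht
      beta_reduce
      calc F y * t ≤ |F y * t| := le_abs_self _
        _ = |F y| * |t| := abs_mul _ _
        _ ≤ ν y * |t| := mul_le_mul_of_nonneg_right (hF y) (abs_nonneg t)
    · rw [← hMAdef]
      exact hηM MA hMA0 (by rw [hMdef]; linarith)
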